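/- Let λ > 0 and K = 1/λ. For every u ∈ U and p ∈ Q one has the identity B_GLS1((u,p),(u,−p)) = (λ/2)‖u‖² + (K/2)‖Gp‖². -/

import Mathlib

open scoped RealInnerProductSpace

/-- For the GLS1 bilinear form with `λ > 0` and `K = 1/λ`, one has
`B_GLS1((u,p),(u,−p)) = (λ/2)‖u‖² + (K/2)‖Gp‖²`. -/
theorem gls1_identity
    {U Q : Type*}
    [NormedAddCommGroup U] [InnerProductSpace ℝ U]
    [NormedAddCommGroup Q] [InnerProductSpace ℝ Q]
    (G : Q →ₗ[ℝ] U)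
    (lam K : ℝ) (hlam : 0 < lam) (hK : K = 1 / lam)
    (B : U × Q → U × Q → ℝ)
    (hB : ∀ u p v q, B (u, p) (v, q) =
      lam * ⟪u, v⟫ + ⟪v, G p⟫ + ⟪u, G q⟫
        - (K / 2) * ⟪lam • u + G p, lam • v + G q⟫) :
    ∀ u p, B (u, p) (u, -p) = (lam / 2) * ‖u‖ ^ 2 + (K / 2) * ‖G p‖ ^ 2 := by
  intro u p
  rw [hB]
  simp only [map_neg, inner_add_add_self, inner_add_left, inner_add_right, inner_neg_neg, inner_neg_right, inner_neg_left,
    inner_smul_left, inner_smul_right, real_inner_self_eq_norm_sq, real_inner_comm u (G p),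
    RCLike.conj_to_real]
  have hKlam : K * lam = 1 := by
    rw [hK, one_div_mul_cancel hlam.ne']
  rw [hK]
  field_simp
  ring
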